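/- Let A, B, C ∈ ℂ^{n×n} and set Z = [[0, B],[A, -C]] ∈ ℂ^{2n×2n}. Then the spectrum of the pencil Z^⋆ - λZ equals the union of the spectrum of A^⋆ - λB and the spectrum of B^⋆ - λA; concretely, det(Z^⋆ - λZ) = ± det(A^⋆ - λB) · det(B^⋆ - λA) up to sign. -/

import Mathlib

open Matrix

open Fin.NatCast in
lemma pow_finRotate_apply (m k : ℕ) (i : Fin (m + 1)) :
    ((finRotate (m + 1)) ^ k) i = i + (k : Fin (m + 1)) := by
  induction k with
  | zero => simp
  | succ k ih =>
    rw [pow_succ', Equiv.Perm.mul_apply, finRotate_succ_apply, ih]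
    push_cast
    exact add_assoc _ _ _

open Fin.NatCast in
lemma sign_sumComm_fin (n : ℕ) :
    Equiv.Perm.sign (Equiv.sumComm (Fin n) (Fin n)) = (-1) ^ n := by
  cases n with
  | zero =>
    have h : (Equiv.sumComm (Fin 0) (Fin 0)) = 1 :=
      Equiv.ext fun x => x.elim (fun a => a.elim0) (fun a => a.elim0)
    simp [h]
  | succ m =>
    set e : (Fin (m+1) ⊕ Fin (m+1)) ≃ Fin (m + 1 + m + 1) :=
      finSumFinEquiv.trans (finCongr (by omega)) with he
    have key : Equiv.permCongr e (Equiv.sumComm (Fin (m+1)) (Fin (m+1)))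
        = (finRotate (m + 1 + m + 1)) ^ (m + 1) := by
      ext x
      rcases h : e.symm x with i | i
      · have hx : x = e (Sum.inl i) := by rw [← h, Equiv.apply_symm_apply]
        subst hx
        rw [Equiv.permCongr_apply, Equiv.symm_apply_apply, Equiv.sumComm_apply, Sum.swap_inl,
          pow_finRotate_apply]
        simp only [he, Equiv.trans_apply, finSumFinEquiv_apply_left, finSumFinEquiv_apply_right,
          finCongr_apply, Fin.coe_cast, Fin.add_def, Fin.val_natCast, Fin.coe_castAdd,
          Fin.coe_natAdd]
        have hi : (i : ℕ) < m + 1 := i.isLt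
        have h1 : (m + 1) % (m + 1 + m + 1) = m + 1 := Nat.mod_eq_of_lt (by omega)
        rw [h1, Nat.mod_eq_of_lt (by omega)]
        omega
      · have hx : x = e (Sum.inr i) := by rw [← h, Equiv.apply_symm_apply]
        subst hx
        rw [Equiv.permCongr_apply, Equiv.symm_apply_apply, Equiv.sumComm_apply, Sum.swap_inr,
          pow_finRotate_apply]
        simp only [he, Equiv.trans_apply, finSumFinEquiv_apply_left, finSumFinEquiv_apply_right,
          finCongr_apply, Fin.coe_cast, Fin.add_def, Fin.val_natCast, Fin.coe_castAdd,
          Fin.coe_natAdd]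
        have hi : (i : ℕ) < m + 1 := i.isLt
        have h1 : (m + 1) % (m + 1 + m + 1) = m + 1 := Nat.mod_eq_of_lt (by omega)
        rw [h1]
        have h2 : m + 1 + (i : ℕ) + (m + 1) = (m + 1 + m + 1) + i := by omega
        rw [h2, Nat.add_mod_left, Nat.mod_eq_of_lt (by omega)]
    have hsign : Equiv.Perm.sign (Equiv.sumComm (Fin (m+1)) (Fin (m+1)))
        = Equiv.Perm.sign ((finRotate (m + 1 + m + 1)) ^ (m + 1)) := by
      rw [← key, Equiv.Perm.sign_permCongr]
    rw [hsign, map_pow, sign_finRotate]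
    have hodd : (m + 1 + m + 1 - 1) * (m + 1) = 2 * (m * (m + 1)) + (m + 1) := by
      rw [Nat.add_sub_cancel]; ring
    rw [← pow_mul, hodd, pow_add, pow_mul]
    norm_num

lemma det_fromBlocks_zero₁₁' {n : ℕ} (X Y W : Matrix (Fin n) (Fin n) ℂ) :
    (fromBlocks 0 X Y W).det = (-1 : ℂ) ^ n * X.det * Y.det := by
  have h : fromBlocks (0 : Matrix (Fin n) (Fin n) ℂ) X Y W
      = (fromBlocks Y W 0 X).submatrix (Equiv.sumComm (Fin n) (Fin n)) id := by
    ext i j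
    rcases i with i | i <;> rcases j with j | j <;> rfl
  rw [h, Matrix.det_permute, sign_sumComm_fin, Matrix.det_fromBlocks_zero₂₁]
  push_cast
  ring

theorem palindromic_pencil_spectrum
    (n : ℕ) (A B C : Matrix (Fin n) (Fin n) ℂ)
    (Z : Matrix (Fin n ⊕ Fin n) (Fin n ⊕ Fin n) ℂ)
    (hZ : Z = fromBlocks 0 B A (-C)) :
    ({lam : ℂ | (Zᴴ - lam • Z).det = 0}
        = {lam : ℂ | (Aᴴ - lam • B).det = 0} ∪ {lam : ℂ | (Bᴴ - lam • A).det = 0}) ∧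
    (∀ lam : ℂ,
      (Zᴴ - lam • Z).det = (-1 : ℂ) ^ n * (Aᴴ - lam • B).det * (Bᴴ - lam • A).det) := by
  subst hZ
  have hblock : ∀ lam : ℂ,
      (fromBlocks 0 B A (-C))ᴴ - lam • fromBlocks 0 B A (-C)
        = fromBlocks 0 (Aᴴ - lam • B) (Bᴴ - lam • A) (lam • C - Cᴴ) := by
    intro lam
    ext i j
    rcases i with i | i <;> rcases j with j | j <;>
      simp [Matrix.conjTranspose_apply, Matrix.fromBlocks, Matrix.sub_apply, Matrix.smul_apply,
        mul_comm, sub_eq_add_neg] <;> ring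
  have hdet : ∀ lam : ℂ,
      ((fromBlocks 0 B A (-C))ᴴ - lam • fromBlocks 0 B A (-C)).det
        = (-1 : ℂ) ^ n * (Aᴴ - lam • B).det * (Bᴴ - lam • A).det := by
    intro lam
    rw [hblock lam, det_fromBlocks_zero₁₁']
  refine ⟨?_, hdet⟩
  ext lam
  simp only [Set.mem_setOf_eq, Set.mem_union, hdet lam, mul_eq_zero]
  constructor
  · rintro ((h | h) | h)
    · exact absurd h (pow_ne_zero _ (by norm_num))
    · exact Or.inl h
    · exact Or.inr h
  · rintro (h | h)
    · exact Or.inl (Or.inr h)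
    · exact Or.inr h
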